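/- With the same setup, Tr(ψ_j(S)(X,Y)∘j) = 4(n+1)·S(X,jY) for all X, Y ∈ V. -/

import Mathlib

open LinearMap

section Helpers

variable {V : Type*} [AddCommGroup V] [Module ℝ V] [FiniteDimensional ℝ V]

lemma trace_smulRight'' (f : V →ₗ[ℝ] ℝ) (v : V) :
    LinearMap.trace ℝ V (f.smulRight v) = f v := by
  have h : f.smulRight v = dualTensorHom ℝ V V (f ⊗ₜ[ℝ] v) := by
    ext z; simp
  rw [h, LinearMap.trace_eq_contract_apply, contractLeft_apply]

lemma smulRight_comp' (f : V →ₗ[ℝ] ℝ) (v : V) (u : V →ₗ[ℝ] V) :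
    (f.smulRight v) ∘ₗ u = (f ∘ₗ u).smulRight v := by
  ext z; simp

lemma trace_skew' (g : V →ₗ[ℝ] V →ₗ[ℝ] ℝ)
    (hnd : ∀ X : V, (∀ Y : V, g X Y = 0) → X = 0)
    (hgsym : ∀ X Y : V, g X Y = g Y X)
    (B : V →ₗ[ℝ] V) (hskew : ∀ Z W : V, g (B Z) W = - g (B W) Z) :
    LinearMap.trace ℝ V B = 0 := by
  set G := LinearMap.BilinForm.toDual g (⟨hnd, fun Y h => hnd Y (fun X => by rw [hgsym]; exact h X)⟩ : LinearMap.BilinForm.Nondegenerate g) with hG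
  have hconj : G.conj B = - B.dualMap := by
    ext f Z
    have h1 : (G.conj B) f Z = g (B (G.symm f)) Z := rfl
    have h2 : g (B (G.symm f)) Z = - f (B Z) := by
      rw [hskew, hgsym]
      have : g ((LinearMap.BilinForm.toDual g (⟨hnd, fun Y h => hnd Y (fun X => by rw [hgsym]; exact h X)⟩ : LinearMap.BilinForm.Nondegenerate g)).symm f) (B Z) = f (B Z) :=
        LinearMap.BilinForm.apply_toDual_symm_apply f (B Z)
      rw [this]
    rw [h1, h2]; simp
  have ht := LinearMap.trace_conj' B G
  rw [hconj] at ht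
  have h3 : LinearMap.trace ℝ (Module.Dual ℝ V) B.dualMap = LinearMap.trace ℝ V B := by
    rw [LinearMap.dualMap_def, LinearMap.trace_transpose']
  have hmn : (LinearMap.trace ℝ (Module.Dual ℝ V)) (-B.dualMap)
      = -(LinearMap.trace ℝ (Module.Dual ℝ V)) B.dualMap := (LinearMap.trace ℝ (Module.Dual ℝ V)).map_neg B.dualMap
  rw [hmn, h3] at ht
  linarith

end Helpers

/-- `Tr(ψ_j(S)(X,Y)∘j) = 4(n+1) S(X,jY)` for all `X, Y`. -/
theorem trace_psi_comp_j
    (V : Type*) [AddCommGroup V] [Module ℝ V] [FiniteDimensional ℝ V]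
    (n : ℕ) (hdim : Module.finrank ℝ V = 2 * n)
    (g : V →ₗ[ℝ] V →ₗ[ℝ] ℝ)
    (hnd : ∀ X : V, (∀ Y : V, g X Y = 0) → X = 0)
    (hgsym : ∀ X Y : V, g X Y = g Y X)
    (j : V →ₗ[ℝ] V) (hj : j ∘ₗ j = -LinearMap.id)
    (hcompat : ∀ X Y : V, g (j X) (j Y) = g X Y)
    (S : V →ₗ[ℝ] V →ₗ[ℝ] ℝ)
    (hSanti : ∀ X Y : V, S X Y = -S Y X)
    (hSj : ∀ X Y : V, S (j X) (j Y) = -S X Y)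
    (ψ : V → V → (V →ₗ[ℝ] V))
    (hψ : ∀ X Y Z W : V, g (ψ X Y Z) W
      = 2 * g X (j Y) * S Z (j W) + 2 * g Z (j W) * S X (j Y)
        + g X (j Z) * S Y (j W) + g Y (j W) * S X (j Z)
        - g X (j W) * S Y (j Z) - g Y (j Z) * S X (j W)) :
    ∀ X Y : V, LinearMap.trace ℝ V (ψ X Y ∘ₗ j)
      = 4 * ((n : ℝ) + 1) * S X (j Y) := by
  have hjj : ∀ Z : V, j (j Z) = -Z := by
    intro Z
    have := congrArg (fun f => f Z) hj
    simpa using this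
  -- σ : the g-dual of the form (Z, W) ↦ S Z (j W)
  set G := LinearMap.BilinForm.toDual g (⟨hnd, fun Y h => hnd Y (fun X => by rw [hgsym]; exact h X)⟩ : LinearMap.BilinForm.Nondegenerate g) with hG
  set σ : V →ₗ[ℝ] V := G.symm.toLinearMap ∘ₗ (S.compl₂ j) with hσdef
  have hσ : ∀ Z W : V, g (σ Z) W = S Z (j W) := by
    intro Z W
    have : g (G.symm ((S.compl₂ j) Z)) W = ((S.compl₂ j) Z) W :=
      LinearMap.BilinForm.apply_toDual_symm_apply _ _
    simpa [hσdef] using this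
  -- S identities
  have hSjswap : ∀ X Y : V, S (j X) Y = S X (j Y) := by
    intro X Y
    have h := hSj X (j Y)
    rw [hjj] at h
    have : S (j X) (-Y) = -S (j X) Y := by simp
    rw [this] at h
    linarith
  -- g identities
  have hgj : ∀ Z W : V, g Z (j W) = - g (j Z) W := by
    intro Z W
    have h := hcompat Z (j W)
    rw [hjj] at h
    have h2 : g (j Z) (-W) = - g (j Z) W := by simp
    rw [h2] at h
    linarith
  intro X Y
  -- decomposition of ψ X Y
  set rhs : V →ₗ[ℝ] V :=
    (2 * g X (j Y)) • σ + (-(2 * S X (j Y))) • j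
      + ((g X ∘ₗ j).smulRight (σ Y)) + (-((S X ∘ₗ j).smulRight (j Y)))
      + ((S Y ∘ₗ j).smulRight (j X)) + (-((g Y ∘ₗ j).smulRight (σ X))) with hrhs
  have hkey : ∀ Z W : V, g (ψ X Y Z) W = g (rhs Z) W := by
    intro Z W
    rw [hψ]
    have hrZ : rhs Z = (2 * g X (j Y)) • σ Z + (-(2 * S X (j Y))) • j Z
        + (g X (j Z)) • σ Y + (-(S X (j Z))) • j Y
        + (S Y (j Z)) • j X + (-(g Y (j Z))) • σ X := by
      simp [hrhs, LinearMap.add_apply, LinearMap.smul_apply, LinearMap.smulRight_apply,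
        LinearMap.neg_apply, LinearMap.comp_apply]
    rw [hrZ]
    simp only [map_add, map_smul, map_neg, LinearMap.add_apply, LinearMap.smul_apply,
      LinearMap.neg_apply, smul_eq_mul]
    rw [hσ Z W, hσ Y W, hσ X W]
    have h1 : g Z (j W) = - g (j Z) W := hgj Z W
    have h2 : g Y (j W) = - g (j Y) W := hgj Y W
    have h3 : g X (j W) = - g (j X) W := hgj X W
    have h4 : g (j Z) W = - g Z (j W) := by rw [h1]; ring
    -- express S X (j W) and S Y (j W) are fine as is; rewrite the g(·, jW) terms
    rw [h1, h2, h3, hgsym (j Z) W, hgsym (j Y) W, hgsym (j X) W] at *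
    ring_nf
  have hdecomp : ψ X Y = rhs := by
    ext Z
    have hz : ∀ W : V, g (ψ X Y Z - rhs Z) W = 0 := by
      intro W
      rw [map_sub, LinearMap.sub_apply, hkey]
      exact sub_self _
    have := hnd _ hz
    exact sub_eq_zero.mp this
  -- trace of σ ∘ j is zero (it is g-skew)
  have hσjskew : ∀ Z W : V, g ((σ ∘ₗ j) Z) W = - g ((σ ∘ₗ j) W) Z := by
    intro Z W
    have h1 : g (σ (j Z)) W = S (j Z) (j W) := hσ (j Z) W
    have h2 : g (σ (j W)) Z = S (j W) (j Z) := hσ (j W) Z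
    simp only [LinearMap.comp_apply, h1, h2, hSj]
    rw [hSanti Z W]
  have htraceσj : LinearMap.trace ℝ V (σ ∘ₗ j) = 0 :=
    trace_skew' g hnd hgsym (σ ∘ₗ j) hσjskew
  -- compute
  rw [hdecomp, hrhs]
  simp only [LinearMap.add_comp, LinearMap.smul_comp, LinearMap.neg_comp,
    smulRight_comp', map_add, map_smul, map_neg, smul_eq_mul]
  rw [htraceσj, hj]
  have htrid : LinearMap.trace ℝ V (-LinearMap.id) = -(2 * n : ℝ) := by
    rw [map_neg, LinearMap.trace_id, hdim]
    push_cast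
    ring
  rw [htrid]
  have t3 : g X (j (j (σ Y))) = S X (j Y) := by
    rw [hjj, map_neg, hgsym X (σ Y), hσ Y X]
    have h := hSjswap X Y
    have h2 : S Y (j X) = - S X (j Y) := by rw [hSanti Y (j X)]; linarith [hSjswap X Y]
    rw [h2]; ring
  have t4 : S X (j (j (j Y))) = - S X (j Y) := by
    rw [hjj (j Y)]; simp
  have t5 : S Y (j (j (j X))) = S X (j Y) := by
    rw [hjj (j X)]
    have h2 : S Y (j X) = - S X (j Y) := by rw [hSanti Y (j X)]; linarith [hSjswap X Y]
    simp [h2]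
  have t6 : g Y (j (j (σ X))) = - S X (j Y) := by
    rw [hjj, map_neg, hgsym Y (σ X), hσ X Y]
  rw [trace_smulRight'', trace_smulRight'', trace_smulRight'', trace_smulRight'']
  simp only [LinearMap.comp_apply]
  rw [t3, t4, t5, t6]
  ring
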